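/- Finite-speed-of-propagation domain structure: for fixed (s₀,y₀) ∈ (0,∞) × B^d, the time-slice of the causal past, D_s := {y ∈ B^d : (e^s/(1−|y|²) − e^{s₀}/(1−|y₀|²))² ≥ |e^s y/(1−|y|²) − e^{s₀}y₀/(1−|y₀|²)|²}, contains the ball of radius R(s) = 1 − e^{s−s₀} centered at P(s)y₀ with P(s) = e^{s−s₀}, for every 0 ≤ s < s₀. -/

import Mathlib

open Real Set

/-- Finite-speed-of-propagation domain structure: for fixed
`(s₀,y₀) ∈ (0,∞) × B^d`, the time-slice of the causal past,
`D_s = {y ∈ B^d : (e^s/(1−|y|²) − e^{s₀}/(1−|y₀|²))² ≥ |e^s y/(1−|y|²) − e^{s₀}y₀/(1−|y₀|²)|²}`,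
contains the ball of radius `R(s) = 1 − e^{s−s₀}` centered at `P(s)y₀` with
`P(s) = e^{s−s₀}`, for every `0 ≤ s < s₀`. -/
theorem causal_past_contains_ball (d : ℕ) (hd : 1 ≤ d)
    (s₀ : ℝ) (hs₀ : 0 < s₀) (y₀ : EuclideanSpace ℝ (Fin d)) (hy₀ : ‖y₀‖ < 1) :
    ∀ s : ℝ, 0 ≤ s → s < s₀ →
      ∀ y : EuclideanSpace ℝ (Fin d),
        ‖y - Real.exp (s - s₀) • y₀‖ < 1 - Real.exp (s - s₀) →
        ‖y‖ < 1 ∧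
        (Real.exp s / (1 - ‖y‖ ^ 2) - Real.exp s₀ / (1 - ‖y₀‖ ^ 2)) ^ 2 ≥
          ‖(Real.exp s / (1 - ‖y‖ ^ 2)) • y -
            (Real.exp s₀ / (1 - ‖y₀‖ ^ 2)) • y₀‖ ^ 2 := by
  intro s hs hss y hy
  set l := Real.exp (s - s₀) with hl
  have hl0 : 0 < l := Real.exp_pos _
  have hl1 : l < 1 := by
    rw [hl, Real.exp_lt_one_iff]; linarith
  have hlF : l * Real.exp s₀ = Real.exp s := by
    rw [hl, ← Real.exp_add]; ring_nf
  have hyn : ‖y‖ < 1 := by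
    have h1 : ‖y‖ ≤ ‖y - l • y₀‖ + ‖l • y₀‖ := by
      simpa using norm_add_le (y - l • y₀) (l • y₀)
    have h2 : ‖l • y₀‖ ≤ l := by
      rw [norm_smul, Real.norm_eq_abs, abs_of_pos hl0]
      nlinarith [norm_nonneg y₀]
    linarith
  have hN : 0 < 1 - ‖y‖ ^ 2 := by nlinarith [norm_nonneg y]
  have hM : 0 < 1 - ‖y₀‖ ^ 2 := by nlinarith [norm_nonneg y₀]
  refine ⟨hyn, ?_⟩
  set A := Real.exp s / (1 - ‖y‖ ^ 2) with hA
  set B := Real.exp s₀ / (1 - ‖y₀‖ ^ 2) with hB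
  have hA0 : 0 < A := div_pos (Real.exp_pos _) hN
  have hB0 : 0 < B := div_pos (Real.exp_pos _) hM
  have hAeq : A * (1 - ‖y‖ ^ 2) = Real.exp s := by
    rw [hA]; field_simp
  have hBeq : B * (1 - ‖y₀‖ ^ 2) = Real.exp s₀ := by
    rw [hB]; field_simp
  -- expand the hypothesis
  have hy2 : ‖y - l • y₀‖ ^ 2 < (1 - l) ^ 2 := by
    have := norm_nonneg (y - l • y₀)
    nlinarith
  have hexp : ‖y - l • y₀‖ ^ 2
      = ‖y‖ ^ 2 - 2 * (l * inner ℝ y y₀) + l ^ 2 * ‖y₀‖ ^ 2 := by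
    rw [norm_sub_sq_real, real_inner_smul_right, norm_smul,
      Real.norm_eq_abs, abs_of_pos hl0, mul_pow]
  have key : ‖y‖ ^ 2 - 2 * (l * inner ℝ y y₀) + l ^ 2 * ‖y₀‖ ^ 2 < (1 - l) ^ 2 := by
    rw [← hexp]; exact hy2
  have hgoal : ‖A • y - B • y₀‖ ^ 2
      = A ^ 2 * ‖y‖ ^ 2 - 2 * (A * B * inner ℝ y y₀) + B ^ 2 * ‖y₀‖ ^ 2 := by
    rw [norm_sub_sq_real, real_inner_smul_right,
      real_inner_smul_left, norm_smul, norm_smul, Real.norm_eq_abs, Real.norm_eq_abs,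
      abs_of_pos hA0, abs_of_pos hB0, mul_pow, mul_pow]
    ring
  rw [hgoal]
  set t : ℝ := inner ℝ y y₀ with ht
  have hYpos : (0:ℝ) < A * B * ((1 - l) ^ 2 - (‖y‖ ^ 2 - 2 * (l * t) + l ^ 2 * ‖y₀‖ ^ 2)) :=
    mul_pos (mul_pos hA0 hB0) (by linarith)
  have hident : l * ((A - B) ^ 2 - (A ^ 2 * ‖y‖ ^ 2 - 2 * (A * B * t) + B ^ 2 * ‖y₀‖ ^ 2))
      = A * B * ((1 - l) ^ 2 - (‖y‖ ^ 2 - 2 * (l * t) + l ^ 2 * ‖y₀‖ ^ 2)) := by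
    linear_combination (l * A - B) * hAeq + l * (B - A * l) * hBeq + (B - l * A) * hlF
  nlinarith [hYpos, hident, hl0]
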